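/- Let 1/2 < u₀ ≤ 2/3. Let ψ : [0,1] → ℝ be continuous piecewise affine, constant on [u₂, 1] for some u₂ < 1, such that ψ is concave and nondecreasing on [0, u₀], ψ is affine on [0, 1/2], ψ(0) = −1, ψ(1/2) < 0, and ψ(u₀) = 0. Define φ : [0,1] → ℝ by φ(u) = 0 for u ∈ [0, u₀] and φ(u) = ψ(u) for u ∈ [u₀, 1]. Then τ(ψ) − 6 ≤ τ(φ) < τ(ψ) − 4. -/

import Mathlib

open MeasureTheory Set

/-- `f : ℝ → ℝ` is *continuous piecewise affine* on `[0,1]`: it is continuous on `[0,1]`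
and there is a finite partition `0 = t₀ < t₁ < ⋯ < t_m = 1` such that `f` is affine on
each subinterval `[t_{j}, t_{j+1}]`. -/
def CtsPiecewiseAffine (f : ℝ → ℝ) : Prop :=
  ContinuousOn f (Set.Icc (0:ℝ) 1) ∧
  ∃ (m : ℕ) (t : ℕ → ℝ), 0 < m ∧ t 0 = 0 ∧ t m = 1 ∧
    (∀ j < m, t j < t (j+1)) ∧
    (∀ j < m, ∃ a b : ℝ, ∀ x ∈ Set.Icc (t j) (t (j+1)), f x = a * x + b)

/-- The *twist* of an edgepath-system function `f`:
`τ(f) = ∫₀¹ (2/(1−u)²)·f′(u) du`. -/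
noncomputable def twist (f : ℝ → ℝ) : ℝ :=
  ∫ u in (0:ℝ)..1, (2/(1-u)^2) * deriv f u

namespace Stmt4Aux

open intervalIntegral

lemma hW {u : ℝ} (hu : u ≠ 1) :
    HasDerivAt (fun x : ℝ => 2/(1-x)^2) (4/(1-u)^3) u := by
  have h0 : (1 - u) ≠ 0 := sub_ne_zero.mpr (Ne.symm hu)
  have h1 : HasDerivAt (fun x : ℝ => (1-x)^2) (2*(1-u)^(2-1)*(-1)) u :=
    (((hasDerivAt_id u).const_sub 1)).pow 2
  have h2 := (h1.inv (pow_ne_zero 2 h0)).const_mul 2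
  have : (fun x : ℝ => 2 * ((1-x)^2)⁻¹) = fun x : ℝ => 2/(1-x)^2 := by
    funext x; rw [div_eq_mul_inv]
  simp only [Pi.inv_apply] at h2
  rw [this] at h2
  refine h2.congr_deriv ?_
  field_simp; ring

inductive PW (f : ℝ → ℝ) : ℝ → ℝ → Prop
  | affine (a b p q : ℝ) (hab : a ≤ b) (h : ∀ x ∈ Set.Icc a b, f x = p * x + q) : PW f a b
  | glue (a c b : ℝ) (h1 : a ≤ c) (h2 : c ≤ b) (hac : PW f a c) (hcb : PW f c b) : PW f a b

lemma PW.refl (f : ℝ → ℝ) (a : ℝ) : PW f a a :=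
  PW.affine a a 0 (f a) le_rfl (by rintro x ⟨h1, h2⟩; have : x = a := le_antisymm h2 h1; simp [this])

lemma PW.split_left {f : ℝ → ℝ} {a b : ℝ} (h : PW f a b) :
    ∀ c, a ≤ c → c ≤ b → PW f a c := by
  induction h with
  | affine a b p q hab h =>
      intro c h1 h2
      exact PW.affine a c p q h1 (fun x hx => h x ⟨hx.1, hx.2.trans h2⟩)
  | glue a m b h1 h2 hac hcb ih1 ih2 =>
      intro c hc1 hc2
      rcases le_or_gt c m with hcm | hcm
      · exact ih1 c hc1 hcm
      · exact PW.glue a m c h1 hcm.le hac (ih2 c hcm.le hc2)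

lemma PW.split_right {f : ℝ → ℝ} {a b : ℝ} (h : PW f a b) :
    ∀ c, a ≤ c → c ≤ b → PW f c b := by
  induction h with
  | affine a b p q hab h =>
      intro c h1 h2
      exact PW.affine c b p q h2 (fun x hx => h x ⟨h1.trans hx.1, hx.2⟩)
  | glue a m b h1 h2 hac hcb ih1 ih2 =>
      intro c hc1 hc2
      rcases le_or_gt c m with hcm | hcm
      · exact PW.glue c m b hcm h2 (ih1 c hc1 hcm) hcb
      · exact ih2 c hcm.le hc2

lemma PW.sub {f : ℝ → ℝ} {a b : ℝ} (h : PW f a b) {a' b' : ℝ}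
    (h1 : a ≤ a') (h2 : a' ≤ b') (h3 : b' ≤ b) : PW f a' b' :=
  (h.split_right a' h1 (h2.trans h3)).split_left b' h2 h3

lemma cpa_pw {f : ℝ → ℝ} (h : CtsPiecewiseAffine f) : PW f 0 1 := by
  obtain ⟨-, m, t, hm, ht0, htm, hlt, haff⟩ := h
  have hmono : ∀ j k, j ≤ k → k ≤ m → t j ≤ t k := by
    intro j k hjk hkm
    induction k with
    | zero => simp_all
    | succ n ih =>
        rcases Nat.lt_or_ge j (n+1) with hj | hj
        · exact (ih (Nat.lt_succ_iff.mp hj) (le_trans (Nat.le_succ n) hkm)).trans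
            (hlt n (Nat.lt_of_succ_le hkm)).le
        · have : j = n + 1 := le_antisymm hjk hj
          simp [this]
  have key : ∀ k, k ≤ m → PW f (t 0) (t k) := by
    intro k
    induction k with
    | zero => intro _; exact PW.refl f (t 0)
    | succ n ih =>
        intro hk
        have hn : n ≤ m := le_trans (Nat.le_succ n) hk
        obtain ⟨p, q, hpq⟩ := haff n (Nat.lt_of_succ_le hk)
        exact PW.glue _ (t n) _ (hmono 0 n (Nat.zero_le n) hn)
          (hlt n (Nat.lt_of_succ_le hk)).le (ih hn)
          (PW.affine (t n) (t (n+1)) p q (hlt n (Nat.lt_of_succ_le hk)).le hpq)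
  have := key m le_rfl
  rwa [ht0, htm] at this

lemma contW' {a b : ℝ} (hb : b < 1) (f : ℝ → ℝ) (hf : ContinuousOn f (Set.Icc a b)) :
    ContinuousOn (fun u => 4/(1-u)^3 * f u) (Set.Icc a b) := by
  apply ContinuousOn.mul _ hf
  apply ContinuousOn.div continuousOn_const (by fun_prop)
  intro x hx
  have hx1 : 0 < 1 - x := by have := hx.2; linarith
  positivity

lemma contW {a b : ℝ} (hb : b < 1) (f : ℝ → ℝ) (hf : ContinuousOn f (Set.Icc a b)) :
    ContinuousOn (fun u => 2/(1-u)^2 * f u) (Set.Icc a b) := by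
  apply ContinuousOn.mul _ hf
  apply ContinuousOn.div continuousOn_const (by fun_prop)
  intro x hx
  have hx1 : 0 < 1 - x := by have := hx.2; linarith
  positivity

lemma PW.ibp {f : ℝ → ℝ} {a b : ℝ} (h : PW f a b) :
    b < 1 → ContinuousOn f (Set.Icc a b) →
    IntervalIntegrable (fun u => 2/(1-u)^2 * deriv f u) volume a b ∧
    ∫ u in a..b, 2/(1-u)^2 * deriv f u
      = 2/(1-b)^2 * f b - 2/(1-a)^2 * f a - ∫ u in a..b, 4/(1-u)^3 * f u := by
  induction h with
  | affine a b p q hab h =>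
      intro hb hf
      have hIcc : Set.uIcc a b = Set.Icc a b := uIcc_of_le hab
      have hae : ∀ᵐ x : ℝ, x ∈ Set.uIoc a b → 2/(1-x)^2 * deriv f x = 2/(1-x)^2 * p := by
        have hb' : ∀ᵐ x : ℝ, x ≠ b := by simp [ae_iff, measure_singleton]
        filter_upwards [hb'] with x hxb hx
        rw [Set.uIoc_of_le hab] at hx
        have hxo : x ∈ Set.Ioo a b := ⟨hx.1, lt_of_le_of_ne hx.2 hxb⟩
        have hev : f =ᶠ[nhds x] (fun y => p * y + q) :=
          Filter.eventually_of_mem (Ioo_mem_nhds hxo.1 hxo.2)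
            (fun y hy => h y ⟨hy.1.le, hy.2.le⟩)
        have : deriv f x = p := by
          rw [Filter.EventuallyEq.deriv_eq hev]
          simpa using (((hasDerivAt_id x).const_mul p).add_const q).deriv
        rw [this]
      have hg : ContinuousOn (fun u : ℝ => 2/(1-u)^2 * p) (Set.Icc a b) :=
        contW hb _ continuousOn_const
      have hgint : IntervalIntegrable (fun u : ℝ => 2/(1-u)^2 * p) volume a b :=
        (hg.mono (by rw [hIcc])).intervalIntegrable
      have hint : IntervalIntegrable (fun u => 2/(1-u)^2 * deriv f u) volume a b := by
        rw [intervalIntegrable_iff] at hgint ⊢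
        apply hgint.congr
        apply (ae_restrict_iff' measurableSet_uIoc).2
        filter_upwards [hae] with x hx h2
        exact (hx h2).symm
      have heqI : ∫ u in a..b, 2/(1-u)^2 * deriv f u = ∫ u in a..b, 2/(1-u)^2 * p :=
        integral_congr_ae hae
      refine ⟨hint, ?_⟩
      have hder : ∀ u ∈ Set.uIcc a b,
          HasDerivAt (fun x : ℝ => 2/(1-x)^2 * (p*x+q))
            (4/(1-u)^3 * (p*u+q) + 2/(1-u)^2 * p) u := by
        intro u hu
        rw [hIcc] at hu
        have hda : HasDerivAt (fun x : ℝ => p * x + q) p u := by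
          simpa using (((hasDerivAt_id u).const_mul p).add_const q)
        exact (hW (ne_of_lt (lt_of_le_of_lt hu.2 hb))).mul hda
      have hcont : ContinuousOn (fun u : ℝ => 4/(1-u)^3 * (p*u+q) + 2/(1-u)^2 * p)
          (Set.Icc a b) :=
        (contW' hb _ (by fun_prop)).add (contW hb _ continuousOn_const)
      have hftc := integral_eq_sub_of_hasDerivAt hder
        ((hcont.mono (by rw [hIcc])).intervalIntegrable)
      have hsplit : ∫ u in a..b, (4/(1-u)^3 * (p*u+q) + 2/(1-u)^2 * p)
          = (∫ u in a..b, 4/(1-u)^3 * (p*u+q)) + ∫ u in a..b, 2/(1-u)^2 * p :=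
        integral_add ((contW' hb _ (by fun_prop)).mono (α := ℝ)
          (by rw [hIcc] : Set.uIcc a b ⊆ Set.Icc a b)).intervalIntegrable hgint
      have hcongr : ∫ u in a..b, 4/(1-u)^3 * f u = ∫ u in a..b, 4/(1-u)^3 * (p*u+q) := by
        apply integral_congr
        intro x hx
        rw [hIcc] at hx
        simp only []
        rw [h x hx]
      have hfa : f a = p * a + q := h a ⟨le_rfl, hab⟩
      have hfb : f b = p * b + q := h b ⟨hab, le_rfl⟩
      rw [heqI, hcongr, hfa, hfb]
      rw [hsplit] at hftc
      linarith
  | glue a c b h1 h2 hac hcb ih1 ih2 =>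
      intro hb hf
      have hcb' : c < 1 := lt_of_le_of_lt h2 hb
      have hab : a ≤ b := h1.trans h2
      obtain ⟨i1, e1⟩ := ih1 hcb' (hf.mono (Set.Icc_subset_Icc le_rfl h2))
      obtain ⟨i2, e2⟩ := ih2 hb (hf.mono (Set.Icc_subset_Icc h1 le_rfl))
      refine ⟨i1.trans i2, ?_⟩
      have hadd := integral_add_adjacent_intervals i1 i2
      have hw : ContinuousOn (fun u => 4/(1-u)^3 * f u) (Set.Icc a b) := contW' hb f hf
      have j1 : IntervalIntegrable (fun u => 4/(1-u)^3 * f u) volume a c :=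
        (hw.mono (by rw [uIcc_of_le h1]; exact Set.Icc_subset_Icc le_rfl h2)).intervalIntegrable
      have j2 : IntervalIntegrable (fun u => 4/(1-u)^3 * f u) volume c b :=
        (hw.mono (by rw [uIcc_of_le h2]; exact Set.Icc_subset_Icc h1 le_rfl)).intervalIntegrable
      have hadd2 := integral_add_adjacent_intervals j1 j2
      rw [← hadd, ← hadd2, e1, e2]; ring

lemma hF {c₁ c₂ : ℝ} {u : ℝ} (hu : u ≠ 1) :
    HasDerivAt (fun x : ℝ => c₁/(1-x) + c₂/(1-x)^2) (c₁/(1-u)^2 + 2*c₂/(1-u)^3) u := by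
  have h0 : (1 - u) ≠ 0 := sub_ne_zero.mpr (Ne.symm hu)
  have h1 : HasDerivAt (fun x : ℝ => 1 - x) (-1) u := by
    simpa using (hasDerivAt_id u).const_sub 1
  have hinv := (h1.inv h0).const_mul c₁
  have h2 : HasDerivAt (fun x : ℝ => (1-x)^2) (2*(1-u)^(2-1)*(-1)) u := h1.pow 2
  have hinv2 := (h2.inv (pow_ne_zero 2 h0)).const_mul c₂
  have hsum := hinv.add hinv2
  have heq : (fun x : ℝ => c₁ * (1-x)⁻¹ + c₂ * ((1-x)^2)⁻¹)
      = fun x : ℝ => c₁/(1-x) + c₂/(1-x)^2 := by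
    funext x; rw [div_eq_mul_inv, div_eq_mul_inv]
  simp only [Pi.add_def, Pi.inv_apply] at hsum
  rw [heq] at hsum
  refine hsum.congr_deriv ?_
  field_simp; ring

lemma exactA {u₀ : ℝ} (h1 : 1/2 < u₀) (h2 : u₀ ≤ 2/3) :
    ∫ u in (0:ℝ)..u₀, 4/(1-u)^3 * (u/u₀ - 1) = -(2*u₀/(1-u₀)) := by
  have hu₀ : (0:ℝ) < u₀ := by linarith
  have hu₀1 : u₀ < 1 := by linarith
  have hIcc : Set.uIcc (0:ℝ) u₀ = Set.Icc 0 u₀ := uIcc_of_le hu₀.le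
  have hder : ∀ u ∈ Set.uIcc (0:ℝ) u₀,
      HasDerivAt (fun x : ℝ => (-4/u₀)/(1-x) + (2*(1-u₀)/u₀)/(1-x)^2)
        (4/(1-u)^3 * (u/u₀ - 1)) u := by
    intro u hu
    rw [hIcc] at hu
    have hu1 : u < 1 := lt_of_le_of_lt hu.2 hu₀1
    have h0 : (1 - u) ≠ 0 := by intro h; linarith [sub_eq_zero.mp h]
    convert hF (c₁ := -4/u₀) (c₂ := 2*(1-u₀)/u₀) (ne_of_lt hu1) using 1
    field_simp; ring
  have hint : IntervalIntegrable (fun u : ℝ => 4/(1-u)^3 * (u/u₀ - 1)) volume 0 u₀ := by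
    apply ContinuousOn.intervalIntegrable
    rw [hIcc]
    apply ContinuousOn.mul _ (by fun_prop)
    apply ContinuousOn.div continuousOn_const (by fun_prop)
    intro x hx
    have hx1 : 0 < 1 - x := by have := hx.2; linarith
    positivity
  rw [integral_eq_sub_of_hasDerivAt hder hint]
  have h0 : (1 - u₀) ≠ 0 := by intro h; nlinarith [sub_eq_zero.mp h]
  have h0' : u₀ ≠ 0 := ne_of_gt hu₀
  field_simp
  ring

lemma exactB {s : ℝ} (h1 : 1 < s) (h2 : s < 2) :
    ∫ u in (0:ℝ)..(1/s), 4/(1-u)^3 * (s*u - 1) = -(2/(s-1)) := by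
  have hs0 : (0:ℝ) < s := by linarith
  have hinv : (0:ℝ) < 1/s := by positivity
  have hinv1 : 1/s < 1 := by rw [div_lt_one hs0]; linarith
  have hIcc : Set.uIcc (0:ℝ) (1/s) = Set.Icc 0 (1/s) := uIcc_of_le hinv.le
  have hder : ∀ u ∈ Set.uIcc (0:ℝ) (1/s),
      HasDerivAt (fun x : ℝ => (-4*s)/(1-x) + (2*(s-1))/(1-x)^2)
        (4/(1-u)^3 * (s*u - 1)) u := by
    intro u hu
    rw [hIcc] at hu
    have hu1 : u < 1 := lt_of_le_of_lt hu.2 hinv1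
    have h0 : (1 - u) ≠ 0 := by intro h; linarith [sub_eq_zero.mp h]
    convert hF (c₁ := -4*s) (c₂ := 2*(s-1)) (ne_of_lt hu1) using 1
    field_simp; ring
  have hint : IntervalIntegrable (fun u : ℝ => 4/(1-u)^3 * (s*u - 1)) volume 0 (1/s) := by
    apply ContinuousOn.intervalIntegrable
    rw [hIcc]
    apply ContinuousOn.mul _ (by fun_prop)
    apply ContinuousOn.div continuousOn_const (by fun_prop)
    intro x hx
    have hx1 : 0 < 1 - x := by have := hx.2; linarith
    positivity
  rw [integral_eq_sub_of_hasDerivAt hder hint]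
  have h0 : (1 - 1/s) ≠ 0 := by
    intro h; have := sub_eq_zero.mp h; rw [← this] at hinv1; linarith
  have hs1 : s - 1 ≠ 0 := by intro h; linarith [sub_eq_zero.mp h]
  field_simp
  ring

end Stmt4Aux

open Stmt4Aux intervalIntegral

/-- (Function-level form of Lemma 3.3(2)(a2).) Let `1/2 < u₀ ≤ 2/3`. Let `ψ` be
continuous piecewise affine on `[0,1]`, constant on `[u₂,1]` for some `u₂ < 1`, concave
and nondecreasing on `[0,u₀]`, affine on `[0,1/2]`, with `ψ(0) = −1`, `ψ(1/2) < 0`, and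
`ψ(u₀) = 0`. Let `φ` be `0` on `[0,u₀]` and equal to `ψ` on `[u₀,1]`.
Then `τ(ψ) − 6 ≤ τ(φ) < τ(ψ) − 4`. -/
theorem stmt4 (u₀ : ℝ) (hu₀gt : 1/2 < u₀) (hu₀le : u₀ ≤ 2/3)
    (ψ : ℝ → ℝ) (hψ : CtsPiecewiseAffine ψ)
    (u₂ : ℝ) (hu₂ : u₂ < 1)
    (hc : ∃ c : ℝ, ∀ u ∈ Set.Icc u₂ (1:ℝ), ψ u = c)
    (hconc : ConcaveOn ℝ (Set.Icc (0:ℝ) u₀) ψ)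
    (hmono : MonotoneOn ψ (Set.Icc (0:ℝ) u₀))
    (haff : ∃ a b : ℝ, ∀ x ∈ Set.Icc (0:ℝ) (1/2:ℝ), ψ x = a * x + b)
    (hψ0 : ψ 0 = -1) (hψhalf : ψ (1/2) < 0) (hψu₀ : ψ u₀ = 0)
    (φ : ℝ → ℝ)
    (hφ0 : ∀ u ∈ Set.Icc (0:ℝ) u₀, φ u = 0)
    (hφψ : ∀ u ∈ Set.Icc u₀ (1:ℝ), φ u = ψ u) :
    twist ψ - 6 ≤ twist φ ∧ twist φ < twist ψ - 4 := by
  obtain ⟨cψ, hcψ⟩ := hc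
  obtain ⟨s, b0, hsψ⟩ := haff
  have hu₀pos : (0:ℝ) < u₀ := by linarith
  have hu₀lt1 : u₀ < 1 := by linarith
  have hcont : ContinuousOn ψ (Set.Icc 0 1) := hψ.1
  have Pψ : PW ψ 0 1 := cpa_pw hψ
  -- the slope of the first piece
  have hb0 : b0 = -1 := by
    have := hsψ 0 ⟨le_rfl, by norm_num⟩
    rw [hψ0] at this; linarith [this]
  have hhalf : ψ (1/2) = s * (1/2) - 1 := by
    have := hsψ (1/2) ⟨by norm_num, le_rfl⟩
    rw [this, hb0]; ring
  have hs2 : s < 2 := by rw [hhalf] at hψhalf; linarith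
  -- tangent bound : ψ u ≤ s*u - 1 on [0,u₀]
  have htan : ∀ u ∈ Set.Icc (0:ℝ) u₀, ψ u ≤ s * u - 1 := by
    intro u hu
    rcases le_or_gt u (1/2) with hu2 | hu2
    · rw [hsψ u ⟨hu.1, hu2⟩, hb0]; linarith
    · have hupos : (0:ℝ) < u := by linarith
      have ha : (0:ℝ) ≤ (u - 1/2)/u := div_nonneg (by linarith) hupos.le
      have hbnn : (0:ℝ) ≤ (1/2)/u := by positivity
      have hab : (u - 1/2)/u + (1/2)/u = 1 := by field_simp; ring
      have hmem0 : (0:ℝ) ∈ Set.Icc (0:ℝ) u₀ := ⟨le_rfl, hu₀pos.le⟩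
      have key := hconc.2 hmem0 hu ha hbnn hab
      have hcomb : ((u - 1/2)/u) • (0:ℝ) + ((1/2)/u) • u = 1/2 := by
        rw [smul_eq_mul, smul_eq_mul, mul_zero, zero_add]
        field_simp
      rw [hcomb] at key
      simp only [smul_eq_mul, hψ0, hhalf] at key
      have key2 := mul_le_mul_of_nonneg_right key hupos.le
      have h3 : (1/2/u * ψ u) * u = 1/2 * ψ u := by
        field_simp
      have h4 : ((u - 1/2)/u * (-1)) * u = -(u - 1/2) := by
        field_simp
      nlinarith [key2, h3, h4]
  -- chord bound : u/u₀ - 1 ≤ ψ u on [0,u₀]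
  have hchord : ∀ u ∈ Set.Icc (0:ℝ) u₀, u/u₀ - 1 ≤ ψ u := by
    intro u hu
    have ha : (0:ℝ) ≤ 1 - u/u₀ := by
      rw [sub_nonneg, div_le_one hu₀pos]; exact hu.2
    have hbnn : (0:ℝ) ≤ u/u₀ := div_nonneg hu.1 hu₀pos.le
    have hab : (1 - u/u₀) + u/u₀ = 1 := by ring
    have hmem0 : (0:ℝ) ∈ Set.Icc (0:ℝ) u₀ := ⟨le_rfl, hu₀pos.le⟩
    have hmemu : u₀ ∈ Set.Icc (0:ℝ) u₀ := ⟨hu₀pos.le, le_rfl⟩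
    have key := hconc.2 hmem0 hmemu ha hbnn hab
    have hcomb : (1 - u/u₀) • (0:ℝ) + ((u/u₀)) • u₀ = u := by
      rw [smul_eq_mul, smul_eq_mul, mul_zero, zero_add]
      field_simp
    rw [hcomb] at key
    simp only [smul_eq_mul, hψ0, hψu₀] at key
    linarith
  -- s*u₀ ≥ 1, 1 < s, 1/s ≤ u₀
  have hsu₀ : 1 ≤ s * u₀ := by
    have := htan u₀ ⟨hu₀pos.le, le_rfl⟩
    rw [hψu₀] at this; linarith
  have hs1 : 1 < s := by nlinarith
  have hspos : (0:ℝ) < s := by linarith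
  have hinvle : 1/s ≤ u₀ := by
    rw [div_le_iff₀ hspos]; nlinarith
  have hinvpos : (0:ℝ) < 1/s := by positivity
  -- ψ ≤ 0 on [0,u₀]
  have hneg : ∀ u ∈ Set.Icc (0:ℝ) u₀, ψ u ≤ 0 := by
    intro u hu
    have := hmono hu ⟨hu₀pos.le, le_rfl⟩ hu.2
    rwa [hψu₀] at this
  -- continuity restrictions
  have hcψ0u : ContinuousOn ψ (Set.Icc 0 u₀) :=
    hcont.mono (Set.Icc_subset_Icc le_rfl hu₀lt1.le)
  -- the key integral I
  set I : ℝ := ∫ u in (0:ℝ)..u₀, 4/(1-u)^3 * ψ u with hIdef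
  have hWψint : IntervalIntegrable (fun u : ℝ => 4/(1-u)^3 * ψ u) volume 0 u₀ :=
    ((contW' hu₀lt1 ψ hcψ0u).mono (by rw [uIcc_of_le hu₀pos.le])).intervalIntegrable
  -- lower bound : -(2*u₀/(1-u₀)) ≤ I, hence -4 ≤ I
  have hIlower : -4 ≤ I := by
    have hintA : IntervalIntegrable (fun u : ℝ => 4/(1-u)^3 * (u/u₀ - 1)) volume 0 u₀ := by
      apply ContinuousOn.intervalIntegrable
      rw [uIcc_of_le hu₀pos.le]
      exact contW' hu₀lt1 _ (by fun_prop)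
    have hmono1 : ∫ u in (0:ℝ)..u₀, 4/(1-u)^3 * (u/u₀ - 1) ≤ I := by
      apply integral_mono_on hu₀pos.le hintA hWψint
      intro x hx
      have hx1 : (0:ℝ) < 1 - x := by have := hx.2; linarith
      have hw : (0:ℝ) ≤ 4/(1-x)^3 := by positivity
      exact mul_le_mul_of_nonneg_left (hchord x hx) hw
    rw [exactA hu₀gt hu₀le] at hmono1
    have h1u₀ : (0:ℝ) < 1 - u₀ := by linarith
    have : 2*u₀/(1-u₀) ≤ 4 := by
      rw [div_le_iff₀ h1u₀]; linarith
    linarith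
  -- upper bound : I < -2
  have hIupper : I < -2 := by
    have hsub1 : Set.Icc (0:ℝ) (1/s) ⊆ Set.Icc (0:ℝ) u₀ := Set.Icc_subset_Icc le_rfl hinvle
    have hint1 : IntervalIntegrable (fun u : ℝ => 4/(1-u)^3 * ψ u) volume 0 (1/s) :=
      ((contW' hu₀lt1 ψ hcψ0u).mono
        (by rw [uIcc_of_le hinvpos.le]; exact hsub1)).intervalIntegrable
    have hint2 : IntervalIntegrable (fun u : ℝ => 4/(1-u)^3 * ψ u) volume (1/s) u₀ :=
      ((contW' hu₀lt1 ψ hcψ0u).mono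
        (by rw [uIcc_of_le hinvle]; exact Set.Icc_subset_Icc hinvpos.le le_rfl)).intervalIntegrable
    have hsplitI : (∫ u in (0:ℝ)..(1/s), 4/(1-u)^3 * ψ u)
        + (∫ u in (1/s:ℝ)..u₀, 4/(1-u)^3 * ψ u) = I :=
      integral_add_adjacent_intervals hint1 hint2
    have hintB : IntervalIntegrable (fun u : ℝ => 4/(1-u)^3 * (s*u - 1)) volume 0 (1/s) := by
      apply ContinuousOn.intervalIntegrable
      rw [uIcc_of_le hinvpos.le]
      apply (contW' (b := u₀) hu₀lt1 _ (by fun_prop)).mono hsub1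
    have hJ1 : (∫ u in (0:ℝ)..(1/s), 4/(1-u)^3 * ψ u) ≤ -(2/(s-1)) := by
      rw [← exactB hs1 hs2]
      apply integral_mono_on hinvpos.le hint1 hintB
      intro x hx
      have hx1 : (0:ℝ) < 1 - x := by
        have := hx.2; have : x ≤ u₀ := le_trans this hinvle; linarith
      have hw : (0:ℝ) ≤ 4/(1-x)^3 := by positivity
      exact mul_le_mul_of_nonneg_left (htan x (hsub1 hx)) hw
    have hJ2 : (∫ u in (1/s:ℝ)..u₀, 4/(1-u)^3 * ψ u) ≤ 0 := by
      have h0 : (∫ u in (1/s:ℝ)..u₀, (0:ℝ)) = 0 := integral_zero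
      rw [← h0]
      apply integral_mono_on hinvle hint2 intervalIntegrable_const
      intro x hx
      have hx1 : (0:ℝ) < 1 - x := by have := hx.2; linarith
      have hw : (0:ℝ) ≤ 4/(1-x)^3 := by positivity
      have := hneg x ⟨le_trans hinvpos.le hx.1, hx.2⟩
      exact mul_nonpos_of_nonneg_of_nonpos hw this
    have hfrac : -(2/(s-1)) < -2 := by
      have hs1' : (0:ℝ) < s - 1 := by linarith
      have : 2 < 2/(s-1) := by
        rw [lt_div_iff₀ hs1']; nlinarith
      linarith
    linarith
  -- Now compute twist ψ - twist φ = 2 - I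
  set s₂ : ℝ := max u₂ u₀ with hs₂def
  have hs₂1 : s₂ < 1 := max_lt hu₂ hu₀lt1
  have hu₀s₂ : u₀ ≤ s₂ := le_max_right _ _
  have hu₂s₂ : u₂ ≤ s₂ := le_max_left _ _
  have hs₂0 : (0:ℝ) ≤ s₂ := le_trans hu₀pos.le hu₀s₂
  -- IBP on [0,u₀] for ψ
  obtain ⟨intA, eqA⟩ := (Pψ.sub le_rfl hu₀pos.le hu₀lt1.le).ibp hu₀lt1 hcψ0u
  -- integrability on [u₀,s₂] for ψ
  obtain ⟨intB, -⟩ := (Pψ.sub hu₀pos.le hu₀s₂ hs₂1.le).ibp hs₂1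
    (hcont.mono (Set.Icc_subset_Icc hu₀pos.le hs₂1.le))
  -- on [s₂,1] : integrand for ψ is a.e. 0
  have haeC : ∀ᵐ x : ℝ, x ∈ Set.uIoc s₂ 1 → 2/(1-x)^2 * deriv ψ x = 0 := by
    have hb' : ∀ᵐ x : ℝ, x ≠ 1 := by simp [ae_iff, measure_singleton]
    filter_upwards [hb'] with x hx1 hx
    rw [Set.uIoc_of_le hs₂1.le] at hx
    have hxo : x ∈ Set.Ioo s₂ 1 := ⟨hx.1, lt_of_le_of_ne hx.2 hx1⟩
    have hev : ψ =ᶠ[nhds x] (fun _ => cψ) :=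
      Filter.eventually_of_mem (Ioo_mem_nhds hxo.1 hxo.2)
        (fun y hy => hcψ y ⟨le_trans hu₂s₂ hy.1.le, hy.2.le⟩)
    have : deriv ψ x = 0 := by
      rw [Filter.EventuallyEq.deriv_eq hev]; simp
    rw [this, mul_zero]
  have intC : IntervalIntegrable (fun u => 2/(1-u)^2 * deriv ψ u) volume s₂ 1 := by
    rw [intervalIntegrable_iff]
    apply (integrable_zero _ _ _).congr
    apply (ae_restrict_iff' measurableSet_uIoc).2
    filter_upwards [haeC] with x hx h2
    exact (hx h2).symm
  have eqC : (∫ u in s₂..(1:ℝ), 2/(1-u)^2 * deriv ψ u) = 0 := by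
    rw [integral_congr_ae haeC]
    simp
  -- twist ψ
  have htwψ : twist ψ = (∫ u in (0:ℝ)..u₀, 2/(1-u)^2 * deriv ψ u)
      + (∫ u in u₀..s₂, 2/(1-u)^2 * deriv ψ u) := by
    have hBC := integral_add_adjacent_intervals intB intC
    have hABC := integral_add_adjacent_intervals intA (intB.trans intC)
    rw [twist, ← hABC, ← hBC, eqC]; ring
  -- derivatives of φ
  have hφd : ∀ x ∈ Set.Ioo u₀ (1:ℝ), deriv φ x = deriv ψ x := by
    intro x hx
    have hev : φ =ᶠ[nhds x] ψ :=
      Filter.eventually_of_mem (Ioo_mem_nhds hx.1 hx.2)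
        (fun y hy => hφψ y ⟨hy.1.le, hy.2.le⟩)
    exact Filter.EventuallyEq.deriv_eq hev
  -- on [0,u₀] : integrand for φ is a.e. 0
  have haeφA : ∀ᵐ x : ℝ, x ∈ Set.uIoc 0 u₀ → 2/(1-x)^2 * deriv φ x = 0 := by
    have hb' : ∀ᵐ x : ℝ, x ≠ u₀ := by simp [ae_iff, measure_singleton]
    filter_upwards [hb'] with x hxu hx
    rw [Set.uIoc_of_le hu₀pos.le] at hx
    have hxo : x ∈ Set.Ioo (0:ℝ) u₀ := ⟨hx.1, lt_of_le_of_ne hx.2 hxu⟩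
    have hev : φ =ᶠ[nhds x] (fun _ => (0:ℝ)) :=
      Filter.eventually_of_mem (Ioo_mem_nhds hxo.1 hxo.2)
        (fun y hy => hφ0 y ⟨hy.1.le, hy.2.le⟩)
    have : deriv φ x = 0 := by
      rw [Filter.EventuallyEq.deriv_eq hev]; simp
    rw [this, mul_zero]
  have intφA : IntervalIntegrable (fun u => 2/(1-u)^2 * deriv φ u) volume 0 u₀ := by
    rw [intervalIntegrable_iff]
    apply (integrable_zero _ _ _).congr
    apply (ae_restrict_iff' measurableSet_uIoc).2
    filter_upwards [haeφA] with x hx h2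
    exact (hx h2).symm
  have eqφA : (∫ u in (0:ℝ)..u₀, 2/(1-u)^2 * deriv φ u) = 0 := by
    rw [integral_congr_ae haeφA]; simp
  -- on [u₀,s₂] : integrand for φ agrees with ψ's
  have haeφB : ∀ᵐ x : ℝ, x ∈ Set.uIoc u₀ s₂ →
      2/(1-x)^2 * deriv φ x = 2/(1-x)^2 * deriv ψ x := by
    apply Filter.Eventually.of_forall
    intro x hx
    rw [Set.uIoc_of_le hu₀s₂] at hx
    rw [hφd x ⟨hx.1, lt_of_le_of_lt hx.2 hs₂1⟩]
  have intφB : IntervalIntegrable (fun u => 2/(1-u)^2 * deriv φ u) volume u₀ s₂ := by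
    rw [intervalIntegrable_iff] at intB ⊢
    apply intB.congr
    apply (ae_restrict_iff' measurableSet_uIoc).2
    filter_upwards [haeφB] with x hx h2
    exact (hx h2).symm
  have eqφB : (∫ u in u₀..s₂, 2/(1-u)^2 * deriv φ u)
      = ∫ u in u₀..s₂, 2/(1-u)^2 * deriv ψ u :=
    integral_congr_ae haeφB
  -- on [s₂,1] : integrand for φ is a.e. 0
  have haeφC : ∀ᵐ x : ℝ, x ∈ Set.uIoc s₂ 1 → 2/(1-x)^2 * deriv φ x = 0 := by
    have hb' : ∀ᵐ x : ℝ, x ≠ 1 := by simp [ae_iff, measure_singleton]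
    filter_upwards [haeC, hb'] with x hx hx1 h2
    have hx' := h2
    rw [Set.uIoc_of_le hs₂1.le] at hx'
    have hxo : x ∈ Set.Ioo u₀ (1:ℝ) :=
      ⟨lt_of_le_of_lt hu₀s₂ hx'.1, lt_of_le_of_ne hx'.2 hx1⟩
    rw [hφd x hxo]
    exact hx h2
  have intφC : IntervalIntegrable (fun u => 2/(1-u)^2 * deriv φ u) volume s₂ 1 := by
    rw [intervalIntegrable_iff]
    apply (integrable_zero _ _ _).congr
    apply (ae_restrict_iff' measurableSet_uIoc).2
    filter_upwards [haeφC] with x hx h2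
    exact (hx h2).symm
  have eqφC : (∫ u in s₂..(1:ℝ), 2/(1-u)^2 * deriv φ u) = 0 := by
    rw [integral_congr_ae haeφC]; simp
  have htwφ : twist φ = ∫ u in u₀..s₂, 2/(1-u)^2 * deriv ψ u := by
    have hBC := integral_add_adjacent_intervals intφB intφC
    have hABC := integral_add_adjacent_intervals intφA (intφB.trans intφC)
    rw [twist, ← hABC, ← hBC, eqφA, eqφC, eqφB]; ring
  -- the difference
  have eqA' : (∫ u in (0:ℝ)..u₀, 2/(1-u)^2 * deriv ψ u) = 2 - I := by
    rw [eqA, hψu₀, hψ0, ← hIdef]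
    norm_num
  have hdiff : twist ψ - twist φ = 2 - I := by
    rw [htwψ, htwφ, eqA']; ring
  constructor
  · linarith
  · linarith
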